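/- arXiv:2005.12457 — 2 statements merged into one kernel-verified Lean document; each statement's English description precedes it below -/
import Mathlib

section
/- Let n and s be positive integers, let m be an integer coprime to n, and let 𝒜 = (Ā_1,…,Ā_s) be local monodromy data of rank ℓ and order n. Let 𝒜^{(m)} = (Ā'_1,…,Ā'_s) be the local monodromy data of rank ℓ and order n determined by the condition that, for every a ∈ {0,1,…,n−1} and every i, the multiplicity of exp(2π√−1·(m·a mod n)/n) as an eigenvalue of Ā'_i equals the multiplicity of exp(2π√−1·a/n) as an eigenvalue of Ā_i. Then v(𝒜^{(m)}) = T_m(v(𝒜)). -/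
open Matrix Complex BigOperators

/-- Square complex matrices of size `ℓ`. -/
abbrev Mat (ℓ : ℕ) : Type := Matrix (Fin ℓ) (Fin ℓ) ℂ

/-- The (ordered) product `A 0 * A 1 * ⋯ * A (s-1)` of a tuple of matrices. -/
noncomputable def tupleProd {s ℓ : ℕ} (A : Fin s → Mat ℓ) : Mat ℓ := (List.ofFn A).prod

/-- `B` is conjugate to `A` in `GL(ℓ, ℂ)`. -/
def ConjGL {ℓ : ℕ} (A B : Mat ℓ) : Prop :=
  ∃ C : Mat ℓ, IsUnit C ∧ B = C * A * C⁻¹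

/-- Every matrix of the tuple lies in the unitary group `U(ℓ)`. -/
def UnitaryTuple {s ℓ : ℕ} (A : Fin s → Mat ℓ) : Prop :=
  ∀ i, A i ∈ Matrix.unitaryGroup (Fin ℓ) ℂ

/-- The tuple is irreducible: the only subspaces of `ℂ^ℓ` invariant under all `A i`
are `0` and `ℂ^ℓ`. -/
def IrredTuple {s ℓ : ℕ} (A : Fin s → Mat ℓ) : Prop :=
  ∀ W : Submodule ℂ (Fin ℓ → ℂ),
    (∀ i, W.map (Matrix.mulVecLin (A i)) ≤ W) → W = ⊥ ∨ W = ⊤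

/-- The tuple is rigid in the sense of Katz: any tuple of invertible matrices with
product `1` whose members are individually conjugate to the `A i` is simultaneously
conjugate to `(A i)` by a single invertible matrix. -/
def RigidTuple {s ℓ : ℕ} (A : Fin s → Mat ℓ) : Prop :=
  ∀ B : Fin s → Mat ℓ, (∀ i, IsUnit (B i)) → tupleProd B = 1 →
    (∀ i, ConjGL (A i) (B i)) →
    ∃ C : Mat ℓ, IsUnit C ∧ ∀ i, B i = C * A i * C⁻¹

/-- The group generated by the `A i` is finite (stated via the submonoid closure,
which coincides with the group closure since all `A i` have finite order). -/
def FiniteMonodromy {s ℓ : ℕ} (A : Fin s → Mat ℓ) : Prop :=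
  Set.Finite ((Submonoid.closure (Set.range A) : Submonoid (Mat ℓ)) : Set (Mat ℓ))

/-- `α` is an eigenvalue of the matrix `A`. -/
def IsEigenvalue {ℓ : ℕ} (A : Mat ℓ) (α : ℂ) : Prop :=
  ∃ v : Fin ℓ → ℂ, v ≠ 0 ∧ A.mulVec v = α • v

/-- Membership in `SU(n)`. -/
def memSU {n : ℕ} (A : Mat n) : Prop :=
  A ∈ Matrix.unitaryGroup (Fin n) ℂ ∧ A.det = 1

/-- The diagonal matrix with entries `exp(2π √-1 a j)`. -/
noncomputable def diagOf {n : ℕ} (a : Fin n → ℝ) : Mat n :=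
  Matrix.diagonal fun j => Complex.exp (((2 * Real.pi * a j : ℝ) : ℂ) * Complex.I)

/-- `A` lies in the conjugacy class of `SU(n)` corresponding to `a ∈ Δ_n`. -/
def inClassOf {n : ℕ} (a : Fin n → ℝ) (A : Mat n) : Prop :=
  ∃ C : Mat n, memSU C ∧ A = C * diagOf a * C⁻¹

/-- The simplex `Δ_n = {a : a_1 ≥ ⋯ ≥ a_n ≥ a_1 - 1, ∑ a_i = 0}`. -/
def DeltaSet (n : ℕ) : Set (Fin n → ℝ) :=
  {a | Antitone a ∧ (∀ i j : Fin n, a i - a j ≤ 1) ∧ ∑ i, a i = 0}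

/-- The multiplicative eigenvalue polytope `P_n(s) ⊆ Δ_n^s`. -/
def Pset (n s : ℕ) : Set (Fin s → Fin n → ℝ) :=
  {a | (∀ i, a i ∈ DeltaSet n) ∧
    ∃ A : Fin s → Mat n, (∀ i, inClassOf (a i) (A i)) ∧ tupleProd A = 1}

/-- `a` is an F-vertex of `P_n(s)`: a vertex (extreme point) such that the
corresponding matrix equation in `SU(n)` has a unique solution up to conjugacy. -/
def IsFVertex (n s : ℕ) (a : Fin s → Fin n → ℝ) : Prop :=
  a ∈ Set.extremePoints ℝ (Pset n s) ∧
  ∀ A A' : Fin s → Mat n,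
    (∀ i, inClassOf (a i) (A i)) → tupleProd A = 1 →
    (∀ i, inClassOf (a i) (A' i)) → tupleProd A' = 1 →
    ∃ C : Mat n, memSU C ∧ ∀ i, A' i = C * A i * C⁻¹

/-- Local monodromy data of rank `ℓ` and order `n` for an `s`-punctured sphere: an
`s`-tuple of semisimple conjugacy classes in `GL(ℓ,ℂ)` with `n`-th power the identity
(recorded by the exponents `μ i` of the eigenvalues `exp(2π √-1 μ^i_j / n)`,
with `n > μ^i_1 ≥ ⋯ ≥ μ^i_ℓ ≥ 0`) whose determinants multiply to `1`. -/
structure MonodromyData (n s ℓ : ℕ) where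
  μ : Fin s → Fin ℓ → ℕ
  antitone : ∀ i, Antitone (μ i)
  lt_n : ∀ i j, μ i j < n
  det_one : (n : ℤ) ∣ ∑ i : Fin s, ∑ j : Fin ℓ, (μ i j : ℤ)

/-- A diagonal representative of the `i`-th conjugacy class of the data. -/
noncomputable def dataDiag {n s ℓ : ℕ} (𝒜 : MonodromyData n s ℓ) (i : Fin s) : Mat ℓ :=
  Matrix.diagonal fun j =>
    Complex.exp (((2 * Real.pi * (𝒜.μ i j : ℝ) / n : ℝ) : ℂ) * Complex.I)

/-- The tuple `A` realizes the local monodromy data `𝒜`: each `A i` lies in the `i`-th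
conjugacy class and the product of the `A i` is the identity. -/
def Realizes {n s ℓ : ℕ} (𝒜 : MonodromyData n s ℓ) (A : Fin s → Mat ℓ) : Prop :=
  (∀ i, ConjGL (dataDiag 𝒜 i) (A i)) ∧ tupleProd A = 1

/-- The point `v(𝒜) ∈ Δ_n^s`, where `λ^i_k = #{j : μ^i_j ≥ k}` is the transposed Young
diagram and `a^i = (1/ℓ)(λ^i − (|λ^i|/n)(1,…,1))`. -/
noncomputable def vOf {n s ℓ : ℕ} (𝒜 : MonodromyData n s ℓ) : Fin s → Fin n → ℝ :=
  fun i k =>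
    (((Finset.univ.filter fun j : Fin ℓ => k.val + 1 ≤ 𝒜.μ i j).card : ℝ)
      - (∑ k' : Fin n,
          ((Finset.univ.filter fun j : Fin ℓ => k'.val + 1 ≤ 𝒜.μ i j).card : ℝ)) / (n : ℝ))
      / (ℓ : ℝ)

/-- `b = T_m(a)`: `b` lies in `Δ_n`, and `b_r − b_{r+1} = a_i − a_{i+1}` whenever
`1 ≤ i, r ≤ n−1` and `r ≡ m·i (mod n)` (indices here are `1`-based as in the paper). -/
def TmRel (n m : ℕ) (a b : Fin n → ℝ) : Prop :=
  b ∈ DeltaSet n ∧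
  ∀ (i r : ℕ) (_ : 1 ≤ i) (hi' : i < n) (_ : 1 ≤ r) (hr' : r < n),
    (m * i) % n = r →
    b ⟨r - 1, by omega⟩ - b ⟨r, hr'⟩ = a ⟨i - 1, by omega⟩ - a ⟨i, hi'⟩

/-- **Theorem (Statement 6).** If `𝒜'` is obtained from `𝒜` by the Galois twist sending
the eigenvalue `exp(2π√-1 a/n)` (with multiplicity) to `exp(2π√-1 (m·a mod n)/n)`, then
`v(𝒜') = T_m(v(𝒜))`. -/
theorem vOf_Galois_twist (n s ℓ m : ℕ) (hn : 0 < n) (hs : 0 < s) (hℓ : 0 < ℓ)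
    (hm : 0 < m) (hcop : Nat.Coprime m n)
    (𝒜 𝒜' : MonodromyData n s ℓ)
    (hmult : ∀ i : Fin s, ∀ a : ℕ, a < n →
      (Finset.univ.filter fun j : Fin ℓ => 𝒜'.μ i j = (m * a) % n).card =
      (Finset.univ.filter fun j : Fin ℓ => 𝒜.μ i j = a).card) :
    ∀ i : Fin s, TmRel n m (vOf 𝒜 i) (vOf 𝒜' i) := by
  classical
  intro i
  have hℓR : (0:ℝ) < (ℓ:ℝ) := by exact_mod_cast hℓ
  have hnR : (n:ℝ) ≠ 0 := by exact_mod_cast hn.ne'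
  -- counting lemma
  have hcard : ∀ (f : Fin ℓ → ℕ) (r : ℕ),
      (Finset.univ.filter fun j => r ≤ f j).card
        = (Finset.univ.filter fun j => r + 1 ≤ f j).card
          + (Finset.univ.filter fun j => f j = r).card := by
    intro f r
    have h1 : (Finset.univ.filter fun j => r ≤ f j) =
        (Finset.univ.filter fun j => r + 1 ≤ f j) ∪
        (Finset.univ.filter fun j => f j = r) := by
      ext j; simp only [Finset.mem_filter, Finset.mem_union, Finset.mem_univ, true_and]
      omega
    have hdisj : Disjoint (Finset.univ.filter fun j => r + 1 ≤ f j)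
        (Finset.univ.filter fun j : Fin ℓ => f j = r) := by
      rw [Finset.disjoint_left]
      intro j hj hj'
      simp only [Finset.mem_filter, Finset.mem_univ, true_and] at hj hj'
      omega
    rw [h1, Finset.card_union_of_disjoint hdisj]
  constructor
  · -- DeltaSet membership
    refine ⟨?_, ?_, ?_⟩
    · intro k k' hkk'
      unfold vOf
      have hmono : ((Finset.univ.filter fun j : Fin ℓ => k'.val + 1 ≤ 𝒜'.μ i j).card : ℝ)
          ≤ ((Finset.univ.filter fun j : Fin ℓ => k.val + 1 ≤ 𝒜'.μ i j).card : ℝ) := by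
        have : (Finset.univ.filter fun j : Fin ℓ => k'.val + 1 ≤ 𝒜'.μ i j)
            ⊆ (Finset.univ.filter fun j : Fin ℓ => k.val + 1 ≤ 𝒜'.μ i j) := by
          intro j hj
          simp only [Finset.mem_filter, Finset.mem_univ, true_and] at hj ⊢
          have : k.val ≤ k'.val := hkk'
          omega
        exact_mod_cast Finset.card_le_card this
      gcongr
    · intro k k'
      unfold vOf
      have h1 : ((Finset.univ.filter fun j : Fin ℓ => k.val + 1 ≤ 𝒜'.μ i j).card : ℝ) ≤ ℓ := by
        have := Finset.card_filter_le Finset.univ (fun j : Fin ℓ => k.val + 1 ≤ 𝒜'.μ i j)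
        calc ((Finset.univ.filter fun j : Fin ℓ => k.val + 1 ≤ 𝒜'.μ i j).card : ℝ) ≤ ((Finset.univ : Finset (Fin ℓ)).card : ℝ) := by exact_mod_cast this
          _ = ℓ := by simp
      have h2 : (0:ℝ) ≤ ((Finset.univ.filter fun j : Fin ℓ => k'.val + 1 ≤ 𝒜'.μ i j).card : ℝ) := Nat.cast_nonneg _
      rw [div_sub_div_same, div_le_one hℓR]
      have : (((Finset.univ.filter fun j : Fin ℓ => k.val + 1 ≤ 𝒜'.μ i j).card : ℝ)
          - (∑ k'' : Fin n, ((Finset.univ.filter fun j : Fin ℓ => k''.val + 1 ≤ 𝒜'.μ i j).card : ℝ)) / (n:ℝ))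
          - (((Finset.univ.filter fun j : Fin ℓ => k'.val + 1 ≤ 𝒜'.μ i j).card : ℝ)
          - (∑ k'' : Fin n, ((Finset.univ.filter fun j : Fin ℓ => k''.val + 1 ≤ 𝒜'.μ i j).card : ℝ)) / (n:ℝ))
          = ((Finset.univ.filter fun j : Fin ℓ => k.val + 1 ≤ 𝒜'.μ i j).card : ℝ)
            - ((Finset.univ.filter fun j : Fin ℓ => k'.val + 1 ≤ 𝒜'.μ i j).card : ℝ) := by ring
      rw [this]
      linarith
    · unfold vOf
      rw [← Finset.sum_div]
      rw [Finset.sum_sub_distrib, Finset.sum_const, Finset.card_univ, Fintype.card_fin]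
      field_simp
      rw [nsmul_eq_mul, mul_div_assoc', mul_div_cancel_left₀ _ hnR]; simp
  · -- difference condition
    intro i0 r hi0 hi0' hr hr' hmr
    unfold vOf
    have hr1 : (r - 1) + 1 = r := by omega
    have key' : ((Finset.univ.filter fun j : Fin ℓ => r ≤ 𝒜'.μ i j).card : ℝ)
        - ((Finset.univ.filter fun j : Fin ℓ => r + 1 ≤ 𝒜'.μ i j).card : ℝ)
        = ((Finset.univ.filter fun j : Fin ℓ => 𝒜'.μ i j = r).card : ℝ) := by
      have := hcard (𝒜'.μ i) r
      push_cast [this]; ring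
    have key : ((Finset.univ.filter fun j : Fin ℓ => i0 ≤ 𝒜.μ i j).card : ℝ)
        - ((Finset.univ.filter fun j : Fin ℓ => i0 + 1 ≤ 𝒜.μ i j).card : ℝ)
        = ((Finset.univ.filter fun j : Fin ℓ => 𝒜.μ i j = i0).card : ℝ) := by
      have := hcard (𝒜.μ i) i0
      push_cast [this]; ring
    have hmm : ((Finset.univ.filter fun j : Fin ℓ => 𝒜'.μ i j = r).card : ℝ)
        = ((Finset.univ.filter fun j : Fin ℓ => 𝒜.μ i j = i0).card : ℝ) := by
      have := hmult i i0 hi0'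
      rw [hmr] at this
      exact_mod_cast this
    have hi1 : (i0 - 1) + 1 = i0 := by omega
    simp only [hr1, hi1]
    rw [div_sub_div_same, div_sub_div_same]
    congr 1
    have lhs_eq : (((Finset.univ.filter fun j : Fin ℓ => r ≤ 𝒜'.μ i j).card : ℝ)
        - (∑ k'' : Fin n, ((Finset.univ.filter fun j : Fin ℓ => k''.val + 1 ≤ 𝒜'.μ i j).card : ℝ)) / (n:ℝ))
        - (((Finset.univ.filter fun j : Fin ℓ => r + 1 ≤ 𝒜'.μ i j).card : ℝ)
        - (∑ k'' : Fin n, ((Finset.univ.filter fun j : Fin ℓ => k''.val + 1 ≤ 𝒜'.μ i j).card : ℝ)) / (n:ℝ))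
        = ((Finset.univ.filter fun j : Fin ℓ => r ≤ 𝒜'.μ i j).card : ℝ)
          - ((Finset.univ.filter fun j : Fin ℓ => r + 1 ≤ 𝒜'.μ i j).card : ℝ) := by ring
    have rhs_eq : (((Finset.univ.filter fun j : Fin ℓ => i0 ≤ 𝒜.μ i j).card : ℝ)
        - (∑ k'' : Fin n, ((Finset.univ.filter fun j : Fin ℓ => k''.val + 1 ≤ 𝒜.μ i j).card : ℝ)) / (n:ℝ))
        - (((Finset.univ.filter fun j : Fin ℓ => i0 + 1 ≤ 𝒜.μ i j).card : ℝ)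
        - (∑ k'' : Fin n, ((Finset.univ.filter fun j : Fin ℓ => k''.val + 1 ≤ 𝒜.μ i j).card : ℝ)) / (n:ℝ))
        = ((Finset.univ.filter fun j : Fin ℓ => i0 ≤ 𝒜.μ i j).card : ℝ)
          - ((Finset.univ.filter fun j : Fin ℓ => i0 + 1 ≤ 𝒜.μ i j).card : ℝ) := by ring
    rw [lhs_eq, rhs_eq, key', key, hmm]
end

section
/- If (A_1,A_2,A_3) is a tuple of matrices in the unitary group U(ℓ) with A_1A_2A_3 = I_ℓ and A_i^2 = I_ℓ for i = 1,2,3, which is irreducible and rigid, then ℓ = 1. In other words, there are no unitary irreducible rigid local systems of rank greater than one on the 3-punctured sphere all of whose local monodromies have eigenvalues ±1. -/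
open Matrix Complex BigOperators

lemma matrix_exists_eigen (n : ℕ) (hn : 0 < n) (M : Mat n) :
    ∃ (μ : ℂ) (v : Fin n → ℂ), v ≠ 0 ∧ M.mulVec v = μ • v := by
  haveI : NeZero n := ⟨hn.ne'⟩
  obtain ⟨μ, hμ⟩ := Module.End.exists_eigenvalue (M.mulVecLin)
  obtain ⟨v, hv⟩ := hμ.exists_hasEigenvector
  exact ⟨μ, v, hv.2, by simpa using hv.apply_eq_smul⟩

lemma invol_det_one (A : Mat 2) (h : A * A = 1) (hd : A.det = 1) : A = 1 ∨ A = -1 := by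
  have hadj : A * A.adjugate = 1 := by rw [Matrix.mul_adjugate, hd, one_smul]
  have hA : A.adjugate = A := by
    calc A.adjugate = (A*A)*A.adjugate := by rw [h, one_mul]
    _ = A*(A*A.adjugate) := by rw [mul_assoc]
    _ = A := by rw [hadj, mul_one]
  rw [Matrix.adjugate_fin_two] at hA
  have h01 : A 0 1 = 0 := by have := congrFun (congrFun hA 0) 1; simp at this; linear_combination -this/2
  have h10 : A 1 0 = 0 := by have := congrFun (congrFun hA 1) 0; simp at this; linear_combination -this/2
  have h00 : A 1 1 = A 0 0 := by have := congrFun (congrFun hA 0) 0; simpa using this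
  rw [Matrix.det_fin_two, h01, h10, h00] at hd
  have : (A 0 0 - 1) * (A 0 0 + 1) = 0 := by linear_combination hd
  rcases mul_eq_zero.mp this with h1 | h1
  · left; ext i j; fin_cases i <;> fin_cases j <;> simp [h01, h10, h00] <;> linear_combination h1
  · right; ext i j; fin_cases i <;> fin_cases j <;> simp [h01, h10, h00] <;> linear_combination h1


/-- **Theorem (Statement 10).** There are no unitary irreducible rigid tuples of rank
`> 1` on the 3-punctured sphere all of whose local monodromies square to the identity. -/
theorem no_rank_gt_one_order_two (ℓ : ℕ) (hℓ : 0 < ℓ) (A : Fin 3 → Mat ℓ)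
    (hU : UnitaryTuple A) (hprod : tupleProd A = 1) (hord : ∀ i, A i ^ 2 = 1)
    (hirr : IrredTuple A) (hrig : RigidTuple A) : ℓ = 1 := by
  have h012 : A 0 * (A 1 * A 2) = 1 := by
    simpa [tupleProd, List.ofFn_succ, mul_assoc] using hprod
  have ha : A 0 * A 0 = 1 := by have := hord 0; rwa [sq] at this
  have hb : A 1 * A 1 = 1 := by have := hord 1; rwa [sq] at this
  have hbc : A 1 * A 2 = A 0 := by
    calc A 1 * A 2 = (A 0 * A 0) * (A 1 * A 2) := by rw [ha, one_mul]
    _ = A 0 * (A 0 * (A 1 * A 2)) := by rw [mul_assoc]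
    _ = A 0 := by rw [h012, mul_one]
  have hc : A 2 = A 1 * A 0 := by
    calc A 2 = (A 1 * A 1) * A 2 := by rw [hb, one_mul]
    _ = A 1 * (A 1 * A 2) := by rw [mul_assoc]
    _ = A 1 * A 0 := by rw [hbc]
  -- step 1 : ℓ ≤ 2
  obtain ⟨μ, v, hv0, hμv⟩ := matrix_exists_eigen ℓ hℓ (A 0 * A 1)
  have hba_ab : (A 1 * A 0) * (A 0 * A 1) = 1 := by
    rw [mul_assoc, ← mul_assoc (A 0) (A 0) (A 1), ha, one_mul, hb]
  have h1 : μ • ((A 1 * A 0).mulVec v) = v := by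
    rw [← mulVec_smul, ← hμv, mulVec_mulVec, hba_ab, one_mulVec]
  have hμ0 : μ ≠ 0 := by
    rintro rfl
    rw [zero_smul] at h1
    exact hv0 h1.symm
  have hbav : (A 1 * A 0).mulVec v = μ⁻¹ • v := by
    calc (A 1 * A 0).mulVec v
        = (μ⁻¹ * μ) • (A 1 * A 0).mulVec v := by rw [inv_mul_cancel₀ hμ0, one_smul]
      _ = μ⁻¹ • (μ • (A 1 * A 0).mulVec v) := by rw [smul_smul]
      _ = μ⁻¹ • v := by rw [h1]
  have hbv : (A 1).mulVec v = μ • (A 0).mulVec v := by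
    calc (A 1).mulVec v = (A 0 * (A 0 * A 1)).mulVec v := by
          rw [← mul_assoc, ha, one_mul]
      _ = (A 0).mulVec ((A 0 * A 1).mulVec v) := by rw [mulVec_mulVec]
      _ = (A 0).mulVec (μ • v) := by rw [hμv]
      _ = μ • (A 0).mulVec v := by rw [mulVec_smul]
  have hvW : v ∈ Submodule.span ℂ {v, (A 0).mulVec v} :=
    Submodule.subset_span (by simp)
  have havW : (A 0).mulVec v ∈ Submodule.span ℂ {v, (A 0).mulVec v} :=
    Submodule.subset_span (by simp)
  have mem_a_v : Matrix.mulVecLin (A 0) v ∈ Submodule.span ℂ {v, (A 0).mulVec v} := by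
    simpa using havW
  have mem_a_av : Matrix.mulVecLin (A 0) ((A 0).mulVec v)
      ∈ Submodule.span ℂ {v, (A 0).mulVec v} := by
    simp only [mulVecLin_apply, mulVec_mulVec, ha, one_mulVec]; exact hvW
  have mem_b_v : Matrix.mulVecLin (A 1) v ∈ Submodule.span ℂ {v, (A 0).mulVec v} := by
    simp only [mulVecLin_apply, hbv]; exact Submodule.smul_mem _ _ havW
  have mem_b_av : Matrix.mulVecLin (A 1) ((A 0).mulVec v)
      ∈ Submodule.span ℂ {v, (A 0).mulVec v} := by
    simp only [mulVecLin_apply, mulVec_mulVec, hbav]; exact Submodule.smul_mem _ _ hvW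
  have mem_c_v : Matrix.mulVecLin (A 2) v ∈ Submodule.span ℂ {v, (A 0).mulVec v} := by
    simp only [mulVecLin_apply, hc, hbav]; exact Submodule.smul_mem _ _ hvW
  have mem_c_av : Matrix.mulVecLin (A 2) ((A 0).mulVec v)
      ∈ Submodule.span ℂ {v, (A 0).mulVec v} := by
    simp only [mulVecLin_apply, hc, mulVec_mulVec, mul_assoc, ha, mul_one, hbv]
    exact Submodule.smul_mem _ _ havW
  have hinv : ∀ i, (Submodule.span ℂ {v, (A 0).mulVec v}).map (Matrix.mulVecLin (A i))
      ≤ Submodule.span ℂ {v, (A 0).mulVec v} := by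
    intro i
    rw [Submodule.map_span_le]
    fin_cases i <;> rintro m (rfl | rfl)
    exacts [mem_a_v, mem_a_av, mem_b_v, mem_b_av, mem_c_v, mem_c_av]
  have hWtop : Submodule.span ℂ {v, (A 0).mulVec v} = ⊤ := by
    rcases hirr _ hinv with h | h
    · exact absurd (h ▸ hvW) (by simpa using hv0)
    · exact h
  have hle : ℓ ≤ 2 := by
    have h := finrank_range_le_card (R := ℂ) ![v, (A 0).mulVec v]
    have hr : Set.range ![v, (A 0).mulVec v] = {v, (A 0).mulVec v} := by
      ext x; simp [Fin.exists_fin_two, or_comm]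
    rw [hr] at h
    unfold Set.finrank at h
    rw [hWtop, finrank_top] at h
    simpa using h
  -- step 2 : ℓ ≠ 2
  interval_cases ℓ
  · rfl
  · exfalso
    have hdet : (A 0).det * ((A 1).det * (A 2).det) = 1 := by
      have := congrArg Matrix.det h012
      simpa [Matrix.det_mul] using this
    have hdet2 : ∀ i, (A i).det = 1 ∨ (A i).det = -1 := by
      intro i
      have h1 : (A i).det * (A i).det = 1 := by
        have := congrArg Matrix.det (hord i)
        rwa [sq, Matrix.det_mul, Matrix.det_one] at this
      have h2 : ((A i).det - 1) * ((A i).det + 1) = 0 := by linear_combination h1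
      rcases mul_eq_zero.mp h2 with h | h
      · left; linear_combination h
      · right; linear_combination h
    have hsome : ∃ j, (A j).det = 1 := by
      by_contra hno
      push_neg at hno
      have h0 := (hdet2 0).resolve_left (hno 0)
      have h1 := (hdet2 1).resolve_left (hno 1)
      have h2 := (hdet2 2).resolve_left (hno 2)
      rw [h0, h1, h2] at hdet
      norm_num at hdet
    obtain ⟨j, hj⟩ := hsome
    have hj2 : A j * A j = 1 := by have := hord j; rwa [sq] at this
    have hsc : ∃ ε : ℂ, A j = ε • (1 : Mat 2) := by
      rcases invol_det_one (A j) hj2 hj with h | h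
      · exact ⟨1, by simpa using h⟩
      · exact ⟨-1, by simpa using h⟩
    obtain ⟨ε, hε⟩ := hsc
    have hcommon : ∃ M : Mat 2, ∀ w (μ' : ℂ), M.mulVec w = μ' • w →
        ∀ i, ∃ ν : ℂ, (A i).mulVec w = ν • w := by
      fin_cases j
      · have hε0 : A 0 = ε • (1 : Mat 2) := hε
        refine ⟨A 1, fun w μ' hw i => ?_⟩
        fin_cases i
        · refine ⟨ε, ?_⟩
          show (A 0).mulVec w = ε • w
          rw [hε0, smul_mulVec, one_mulVec]
        · exact ⟨μ', hw⟩
        · refine ⟨ε * μ', ?_⟩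
          show (A 2).mulVec w = (ε * μ') • w
          rw [hc, ← mulVec_mulVec, hε0, smul_mulVec, one_mulVec, mulVec_smul, hw,
            smul_smul]
      · have hε1 : A 1 = ε • (1 : Mat 2) := hε
        refine ⟨A 0, fun w μ' hw i => ?_⟩
        fin_cases i
        · exact ⟨μ', hw⟩
        · refine ⟨ε, ?_⟩
          show (A 1).mulVec w = ε • w
          rw [hε1, smul_mulVec, one_mulVec]
        · refine ⟨ε * μ', ?_⟩
          show (A 2).mulVec w = (ε * μ') • w
          rw [hc, ← mulVec_mulVec, hw, mulVec_smul, hε1, smul_mulVec, one_mulVec,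
            smul_smul, mul_comm μ' ε]
      · have hε2 : A 2 = ε • (1 : Mat 2) := hε
        have hb' : A 1 = ε • A 0 := by
          calc A 1 = A 1 * (A 0 * A 0) := by rw [ha, mul_one]
          _ = (A 1 * A 0) * A 0 := by rw [mul_assoc]
          _ = A 2 * A 0 := by rw [hc]
          _ = ε • A 0 := by rw [hε2, smul_mul_assoc, one_mul]
        refine ⟨A 0, fun w μ' hw i => ?_⟩
        fin_cases i
        · exact ⟨μ', hw⟩
        · refine ⟨ε * μ', ?_⟩
          show (A 1).mulVec w = (ε * μ') • w
          rw [hb', smul_mulVec, hw, smul_smul]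
        · refine ⟨ε, ?_⟩
          show (A 2).mulVec w = ε • w
          rw [hε2, smul_mulVec, one_mulVec]
    obtain ⟨M, hM⟩ := hcommon
    obtain ⟨μ', w, hw0, hww⟩ := matrix_exists_eigen 2 (by norm_num) M
    have hwW' : w ∈ Submodule.span ℂ {w} := Submodule.mem_span_singleton_self w
    have hinv' : ∀ i, (Submodule.span ℂ {w}).map (Matrix.mulVecLin (A i))
        ≤ Submodule.span ℂ {w} := by
      intro i
      rw [Submodule.map_span_le]
      rintro m rfl
      obtain ⟨ν, hν⟩ := hM _ μ' hww i
      simp only [mulVecLin_apply, hν]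
      exact Submodule.smul_mem _ _ (Submodule.mem_span_singleton_self _)
    rcases hirr _ hinv' with h | h
    · exact absurd (h ▸ hwW') (by simpa using hw0)
    · have h1 : Module.finrank ℂ (Submodule.span ℂ ({w} : Set (Fin 2 → ℂ))) ≤ 1 := by
        simpa using finrank_span_le_card (R := ℂ) ({w} : Set (Fin 2 → ℂ))
      rw [h, finrank_top] at h1
      simp at h1
end
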